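/- Let Ω ⊂ B_R ⊂ ℝⁿ be bounded open and F ⊆ Ω measurable with Per_{s₀}(F;Ω) < ∞ for some s₀ ∈ (0,1). Then lim_{s→0⁺} s·∫_F ∫_{B_R∖F} |x−y|^{-(n+s)} dx dy = 0. -/

import Mathlib

open MeasureTheory Filter Metric Set

noncomputable def interL (n : ℕ) (s : ℝ) (A B : Set (EuclideanSpace ℝ (Fin n))) : ENNReal :=
  ∫⁻ x in A, ∫⁻ y in B, ENNReal.ofReal (‖x - y‖ ^ (-((n : ℝ) + s)))

noncomputable def fracPer (n : ℕ) (s : ℝ) (E Ω : Set (EuclideanSpace ℝ (Fin n))) : ENNReal :=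
  interL n s (E ∩ Ω) (Eᶜ ∩ Ω) + interL n s (E ∩ Ω) (Eᶜ ∩ Ωᶜ) + interL n s (E ∩ Ωᶜ) (Eᶜ ∩ Ω)

/-- The (n-1)-dimensional measure of the unit sphere `S^{n-1}`, i.e. `n·ω_n`. -/
noncomputable def sphereArea (n : ℕ) : ℝ :=
  (n : ℝ) * (volume (ball (0 : EuclideanSpace ℝ (Fin n)) 1)).toReal

lemma kernel_le {n : ℕ} {s s₀ : ℝ} (hs : 0 < s) (hss : s ≤ s₀) (r : ℝ) (hr : 0 ≤ r) :
    r ^ (-((n : ℝ) + s)) ≤ r ^ (-((n : ℝ) + s₀)) + 1 := by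
  have hns : (0:ℝ) < (n:ℝ) + s := by positivity
  rcases eq_or_lt_of_le hr with h0 | h0
  · rw [← h0, Real.zero_rpow (by linarith : -((n:ℝ)+s) ≠ 0)]
    have := Real.rpow_nonneg (le_refl (0:ℝ)) (-((n:ℝ)+s₀))
    linarith
  rcases le_or_gt r 1 with h1 | h1
  · have := Real.rpow_le_rpow_of_exponent_ge h0 h1 (by linarith : -((n:ℝ)+s₀) ≤ -((n:ℝ)+s))
    linarith
  · have h2 := Real.rpow_le_one_of_one_le_of_nonpos h1.le (by linarith : -((n:ℝ)+s) ≤ 0)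
    have h3 : 0 ≤ r ^ (-((n:ℝ)+s₀)) := Real.rpow_nonneg hr _
    linarith

lemma kernel_meas {n : ℕ} (c : ℝ) (A : Set (EuclideanSpace ℝ (Fin n))) :
    Measurable (fun x : EuclideanSpace ℝ (Fin n) =>
      ∫⁻ y in A, ENNReal.ofReal (‖x - y‖ ^ c)) := by
  have hk : Measurable (fun p : EuclideanSpace ℝ (Fin n) × EuclideanSpace ℝ (Fin n) =>
      ENNReal.ofReal (‖p.1 - p.2‖ ^ c)) := by
    apply ENNReal.measurable_ofReal.comp
    exact ((continuous_fst.sub continuous_snd).norm.measurable).pow_const c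
  exact hk.lintegral_prod_right'

theorem stmt_8 {n : ℕ} (Ω F : Set (EuclideanSpace ℝ (Fin n))) (R : ℝ)
    (hΩo : IsOpen Ω) (hΩb : Bornology.IsBounded Ω) (hΩR : Ω ⊆ ball 0 R)
    (hF : MeasurableSet F) (hFΩ : F ⊆ Ω)
    (s₀ : ℝ) (hs₀ : s₀ ∈ Set.Ioo (0 : ℝ) 1) (hfin : fracPer n s₀ F Ω ≠ ⊤) :
    Tendsto (fun s : ℝ => s * (interL n s F (ball 0 R \ F)).toReal)
      (nhdsWithin 0 (Set.Ioi 0)) (nhds 0) := by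
  obtain ⟨hs₀0, hs₀1⟩ := hs₀
  set B : Set (EuclideanSpace ℝ (Fin n)) := ball 0 R with hB
  have hFΩ' : F ∩ Ω = F := inter_eq_left.mpr hFΩ
  have hvolB : volume B ≠ ⊤ := measure_ball_lt_top.ne
  have hvolF : volume F ≠ ⊤ :=
    (lt_of_le_of_lt (measure_mono (hFΩ.trans hΩR)) measure_ball_lt_top).ne
  -- finiteness at s₀
  have hkey : interL n s₀ F (B \ F) ≠ ⊤ := by
    have hsub : B \ F ⊆ (Fᶜ ∩ Ω) ∪ (Fᶜ ∩ Ωᶜ) := by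
      intro y hy
      by_cases h : y ∈ Ω
      · exact Or.inl ⟨hy.2, h⟩
      · exact Or.inr ⟨hy.2, h⟩
    have h1 : interL n s₀ F (B \ F) ≤ interL n s₀ F (Fᶜ ∩ Ω) + interL n s₀ F (Fᶜ ∩ Ωᶜ) := by
      have hmono : interL n s₀ F (B \ F) ≤ interL n s₀ F ((Fᶜ ∩ Ω) ∪ (Fᶜ ∩ Ωᶜ)) :=
        lintegral_mono fun x => lintegral_mono' (Measure.restrict_mono hsub le_rfl) le_rfl
      refine hmono.trans ?_
      unfold interL
      calc ∫⁻ x in F, ∫⁻ y in (Fᶜ ∩ Ω) ∪ (Fᶜ ∩ Ωᶜ), ENNReal.ofReal (‖x - y‖ ^ (-((n : ℝ) + s₀)))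
          ≤ ∫⁻ x in F, ((∫⁻ y in Fᶜ ∩ Ω, ENNReal.ofReal (‖x - y‖ ^ (-((n : ℝ) + s₀))))
            + ∫⁻ y in Fᶜ ∩ Ωᶜ, ENNReal.ofReal (‖x - y‖ ^ (-((n : ℝ) + s₀)))) :=
            lintegral_mono fun x => lintegral_union_le _ _ _
        _ = _ := lintegral_add_left (kernel_meas _ _) _
    have h2 : interL n s₀ F (Fᶜ ∩ Ω) + interL n s₀ F (Fᶜ ∩ Ωᶜ) ≠ ⊤ := by
      have := hfin
      unfold fracPer at this
      rw [hFΩ'] at this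
      exact fun h => this (by rw [ENNReal.add_eq_top]; left; exact h)
    exact (lt_of_le_of_lt h1 (lt_top_iff_ne_top.mpr h2)).ne
  -- uniform bound
  set C : ENNReal := interL n s₀ F (B \ F) + volume F * volume (B \ F) with hC
  have hCne : C ≠ ⊤ := by
    refine ENNReal.add_ne_top.mpr ⟨hkey, ENNReal.mul_ne_top hvolF ?_⟩
    exact ((measure_mono (diff_subset)).trans_lt measure_ball_lt_top).ne
  have hbound : ∀ s ∈ Ioo (0:ℝ) s₀, interL n s F (B \ F) ≤ C := by
    intro s hs
    have hpt : ∀ x y : EuclideanSpace ℝ (Fin n),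
        ENNReal.ofReal (‖x - y‖ ^ (-((n : ℝ) + s)))
          ≤ ENNReal.ofReal (‖x - y‖ ^ (-((n : ℝ) + s₀))) + 1 := by
      intro x y
      calc ENNReal.ofReal (‖x - y‖ ^ (-((n : ℝ) + s)))
          ≤ ENNReal.ofReal (‖x - y‖ ^ (-((n : ℝ) + s₀)) + 1) :=
            ENNReal.ofReal_le_ofReal (kernel_le hs.1 hs.2.le _ (norm_nonneg _))
        _ = _ := by
            rw [ENNReal.ofReal_add (Real.rpow_nonneg (norm_nonneg _) _) zero_le_one,
              ENNReal.ofReal_one]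
    unfold interL
    calc ∫⁻ x in F, ∫⁻ y in B \ F, ENNReal.ofReal (‖x - y‖ ^ (-((n : ℝ) + s)))
        ≤ ∫⁻ x in F, ∫⁻ y in B \ F,
            (ENNReal.ofReal (‖x - y‖ ^ (-((n : ℝ) + s₀))) + 1) :=
          lintegral_mono fun x => lintegral_mono fun y => hpt x y
      _ = ∫⁻ x in F, ((∫⁻ y in B \ F, ENNReal.ofReal (‖x - y‖ ^ (-((n : ℝ) + s₀))))
            + volume (B \ F)) := by
          refine lintegral_congr fun x => ?_
          rw [lintegral_add_right _ measurable_const, lintegral_const,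
            Measure.restrict_apply_univ, one_mul]
      _ = interL n s₀ F (B \ F) + volume F * volume (B \ F) := by
          rw [lintegral_add_right _ measurable_const, lintegral_const,
            Measure.restrict_apply_univ, mul_comm (volume (B \ F))]
          rfl
  -- conclude
  have hCr : Tendsto (fun s : ℝ => s * C.toReal) (nhdsWithin 0 (Ioi 0)) (nhds 0) := by
    have : Tendsto (fun s : ℝ => s * C.toReal) (nhds 0) (nhds 0) := by
      simpa using (continuous_mul_const C.toReal).tendsto (0:ℝ)
    exact this.mono_left nhdsWithin_le_nhds
  refine squeeze_zero' ?_ ?_ hCr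
  · filter_upwards [self_mem_nhdsWithin] with s hs
    exact mul_nonneg (le_of_lt hs) ENNReal.toReal_nonneg
  · filter_upwards [Ioo_mem_nhdsGT_of_mem (Set.mem_Ico.mpr ⟨le_refl 0, hs₀0⟩)] with s hs
    exact mul_le_mul_of_nonneg_left
      (ENNReal.toReal_mono hCne (hbound s hs)) hs.1.le
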